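/- Let G be a k-peg Hanoi group with generating set S, and let g ∈ G with g ≠ 1 have a representation g = s_n⋯s_2s_1 with essential set Q. Then: (1) g|_j = g for every j ∈ Q; and (2) l(g|_j) < n for every j ∉ Q. -/

import Mathlib

/-!
Common framework: automorphisms of the rooted tree `X_k^*`, root permutations,
sections, self-similar and contracting groups, Hanoi automorphisms and Hanoi
groups, following Makisumi–Stadnyk–Steinhurst, "Modified Hanoi Towers Groups
and Limit Spaces".

A word `x_n … x_1` over the alphabet `X_k = Fin k` is encoded as the list
`[x_n, …, x_1]`, whose head `x_n` is the first letter, i.e. the letter that a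
tree automorphism reads (and permutes) first.
-/

namespace Hanoi

/-- Words over the alphabet `X_k = Fin k`. -/
abbrev Word (k : ℕ) := List (Fin k)

/-- `e` is an automorphism of the rooted tree `X_k^*`: it fixes the root
(the empty word), preserves word length (levels) and preserves the tree
structure (words sharing an initial segment of length `n` are sent to words
sharing an initial segment of length `n`). -/
def IsTreeAut {k : ℕ} (e : Equiv.Perm (Word k)) : Prop :=
  (∀ w : Word k, (e w).length = w.length) ∧
    ∀ (w v : Word k) (n : ℕ), w.take n = v.take n → (e w).take n = (e v).take n

open Classical in
/-- The root permutation `σ_e` of a tree automorphism `e` (its action on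
one-letter words). -/
noncomputable def rootPerm {k : ℕ} (e : Equiv.Perm (Word k)) : Equiv.Perm (Fin k) :=
  if h : Function.Bijective (fun x : Fin k => ((e [x]).head?.getD x)) then
    Equiv.ofBijective _ h
  else 1

open Classical in
/-- The section `e|_x` of `e` at a letter `x`: the unique automorphism with
`e (x :: w) = σ_e x :: (e|_x) w` for all words `w`. -/
noncomputable def sec {k : ℕ} (e : Equiv.Perm (Word k)) (x : Fin k) : Equiv.Perm (Word k) :=
  if h : Function.Bijective (fun w : Word k => (e (x :: w)).tail) then
    Equiv.ofBijective _ h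
  else 1

/-- The section `e|_v` of `e` at a word `v = x_n … x_1`, defined by
`e|_v = (e|_{x_n})|_{x_{n-1} … x_1}`. -/
noncomputable def secW {k : ℕ} (e : Equiv.Perm (Word k)) : Word k → Equiv.Perm (Word k)
  | [] => e
  | x :: v => secW (sec e x) v

/-- A subgroup of the permutations of `X_k^*` is self-similar if it consists of
tree automorphisms and is closed under taking sections. -/
def IsSelfSimilar {k : ℕ} (G : Subgroup (Equiv.Perm (Word k))) : Prop :=
  (∀ g ∈ G, IsTreeAut g) ∧ ∀ g ∈ G, ∀ x : Fin k, sec g x ∈ G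

/-- A self-similar group `G` is contracting if there is a finite subset `N ⊆ G`
such that for every `g ∈ G` all sections of `g` at words of length at least
some `m` lie in `N`. -/
def IsContracting {k : ℕ} (G : Subgroup (Equiv.Perm (Word k))) : Prop :=
  ∃ N : Set (Equiv.Perm (Word k)), N.Finite ∧ N ⊆ (G : Set (Equiv.Perm (Word k))) ∧
    ∀ g ∈ G, ∃ m : ℕ, ∀ v : Word k, m ≤ v.length → secW g v ∈ N

/-- `N` is the nucleus of `G`: a smallest finite subset of `G` catching all
deep enough sections of every element of `G`. -/
def IsNucleus {k : ℕ} (G : Subgroup (Equiv.Perm (Word k)))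
    (N : Set (Equiv.Perm (Word k))) : Prop :=
  (N.Finite ∧ N ⊆ (G : Set (Equiv.Perm (Word k))) ∧
    ∀ g ∈ G, ∃ m : ℕ, ∀ v : Word k, m ≤ v.length → secW g v ∈ N) ∧
  ∀ N' : Set (Equiv.Perm (Word k)), N'.Finite → N' ⊆ (G : Set (Equiv.Perm (Word k))) →
    (∀ g ∈ G, ∃ m : ℕ, ∀ v : Word k, m ≤ v.length → secW g v ∈ N') → N ⊆ N'

/-- `a` is a Hanoi automorphism with set of inactive pegs `Q`: the section at
each active peg (element of the complement of `Q`) is trivial, the section at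
each inactive peg is `a` itself, and the root permutation fixes each inactive
peg. -/
def IsHanoiWith {k : ℕ} (a : Equiv.Perm (Word k)) (Q : Set (Fin k)) : Prop :=
  IsTreeAut a ∧ (∀ i ∉ Q, sec a i = 1) ∧ (∀ j ∈ Q, sec a j = a) ∧
    ∀ j ∈ Q, rootPerm a j = j

/-- `a` is a `k`-peg Hanoi automorphism. -/
def IsHanoiAut {k : ℕ} (a : Equiv.Perm (Word k)) : Prop := ∃ Q, IsHanoiWith a Q

open Classical in
/-- The set `Q_a` of inactive pegs of a Hanoi automorphism `a`; by convention
`Q_1 = X_k` (for `a ≠ 1` the set of inactive pegs is uniquely determined). -/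
noncomputable def inactivePegs {k : ℕ} (a : Equiv.Perm (Word k)) : Set (Fin k) :=
  if a = 1 then Set.univ
  else if h : ∃ Q, IsHanoiWith a Q then h.choose else ∅

/-- `S_{k,q}`: the set of Hanoi automorphisms over `X_k` with exactly `q`
inactive pegs. -/
noncomputable def hanoiSet (k q : ℕ) : Set (Equiv.Perm (Word k)) :=
  {a | IsHanoiAut a ∧ (inactivePegs a).ncard = q}

/-- `L = [s_n, …, s_1]` is a representation of `g` over the generating set `S`:
each `s_i ∈ S ∪ S⁻¹` and `g = s_n ⋯ s_2 s_1`. -/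
def IsRepOf {k : ℕ} (S : Set (Equiv.Perm (Word k))) (L : List (Equiv.Perm (Word k)))
    (g : Equiv.Perm (Word k)) : Prop :=
  (∀ s ∈ L, s ∈ S ∨ s⁻¹ ∈ S) ∧ L.prod = g

/-- The length `l(g)` of `g` with respect to `S`: the length of a minimal
representation (`0` for the identity). -/
noncomputable def repLength {k : ℕ} (S : Set (Equiv.Perm (Word k)))
    (g : Equiv.Perm (Word k)) : ℕ :=
  sInf {n | ∃ L, IsRepOf S L g ∧ L.length = n}

/-- The essential set of a representation: the intersection of the sets of
inactive pegs of its letters. -/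
noncomputable def essSet {k : ℕ} (L : List (Equiv.Perm (Word k))) : Set (Fin k) :=
  ⋂ s ∈ L, inactivePegs s

/-- The prenucleus of `G`: the set of elements `g ∈ G` with `g|_j = g` for some
letter `j`. -/
noncomputable def preNucleus {k : ℕ} (G : Subgroup (Equiv.Perm (Word k))) :
    Set (Equiv.Perm (Word k)) :=
  {g | g ∈ G ∧ ∃ j : Fin k, sec g j = g}

/-- The underlying function of the Hanoi Towers move `a_{ij}`: it changes the
first occurrence of `i` or `j` in a word by means of the transposition `(i j)`
and leaves the rest of the word unchanged. -/
def hanoiMoveFun {k : ℕ} (i j : Fin k) : Word k → Word k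
  | [] => []
  | x :: w => if x = i ∨ x = j then Equiv.swap i j x :: w else x :: hanoiMoveFun i j w

theorem hanoiMoveFun_involutive {k : ℕ} (i j : Fin k) :
    Function.Involutive (hanoiMoveFun i j) := by
  intro w
  induction w with
  | nil => rfl
  | cons x t ih =>
    by_cases h : x = i ∨ x = j
    · have h2 : Equiv.swap i j x = i ∨ Equiv.swap i j x = j := by
        rcases h with h | h <;> subst h <;> simp
      simp only [hanoiMoveFun, if_pos h, if_pos h2, Equiv.swap_apply_self]
    · simp only [hanoiMoveFun, if_neg h, ih]

/-- The Hanoi Towers move `a_{ij}`, as a permutation of `X_k^*`: its root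
permutation is the transposition `(i j)`, its sections at `i` and `j` are
trivial and all its other sections equal `a_{ij}` itself. -/
def hanoiMove {k : ℕ} (i j : Fin k) : Equiv.Perm (Word k) :=
  (hanoiMoveFun_involutive i j).toPerm

/-- The orbit of the letter `j` under the subgroup of `Sym(X_k)` generated by
the root permutations of the elements of `T`. -/
noncomputable def orbT {k : ℕ} (T : Finset (Equiv.Perm (Word k))) (j : Fin k) : Set (Fin k) :=
  MulAction.orbit (Subgroup.closure ((fun a => rootPerm a) '' (T : Set (Equiv.Perm (Word k))))) j

/-- The set `Fix(T)` of letters fixed by the root permutation of every element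
of `T`. -/
noncomputable def fixT {k : ℕ} (T : Finset (Equiv.Perm (Word k))) : Set (Fin k) :=
  {x | ∀ s ∈ T, rootPerm s x = x}

/-- Condition (*) on a generating set `S` of Hanoi automorphisms: for every
finite `T ⊆ S` with nonempty essential set and every letter `j ∉ Fix(T)`,
the orbit of `j` misses the inactive pegs of some element of `T`. -/
noncomputable def CondStar {k : ℕ} (S : Set (Equiv.Perm (Word k))) : Prop :=
  ∀ T : Finset (Equiv.Perm (Word k)), (T : Set (Equiv.Perm (Word k))) ⊆ S →
    (⋂ s ∈ T, inactivePegs s).Nonempty →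
    ∀ j : Fin k, j ∉ fixT T →
      ∃ s ∈ T, orbT T j ∩ inactivePegs s = ∅

open Classical in
/-- `d(g)`: the least number of distinct generators occurring among all
representations of `g` having nonempty essential set. -/
noncomputable def dCount {k : ℕ} (S : Set (Equiv.Perm (Word k)))
    (g : Equiv.Perm (Word k)) : ℕ :=
  sInf {M | ∃ L, IsRepOf S L g ∧ (essSet L).Nonempty ∧ L.toFinset.card = M}

/-- `S` is fully symmetric: for every non-identity `a ∈ S` and every
`φ ∈ Sym(X_k)`, the Hanoi automorphism `φ·a` with inactive pegs `φ(Q_a)` and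
root permutation `φ ∘ σ_a ∘ φ⁻¹` again lies in `S`. -/
noncomputable def FullySymmetric {k : ℕ} (S : Set (Equiv.Perm (Word k))) : Prop :=
  ∀ a ∈ S, a ≠ 1 → ∀ φ : Equiv.Perm (Fin k), ∀ b : Equiv.Perm (Word k),
    IsHanoiWith b (φ '' inactivePegs a) →
    rootPerm b = φ * rootPerm a * φ⁻¹ → b ∈ S

/-- The family `R̲_{k,n}`: the identity together with all Hanoi automorphisms
`a` such that (1) `Q_a ⊆ {m+1, …, m+n}` for some `m`, and (2) whenever
`i ∈ Q_a` the root permutation of `a` fixes `i-1, …, i-(n-1)`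
(all peg labels mod `k`). -/
noncomputable def Runder (k n : ℕ) : Set (Equiv.Perm (Word k)) :=
  {a | a = 1 ∨ (IsHanoiAut a ∧
    (∃ m : Fin k, ∀ q ∈ inactivePegs a, ∃ t : ℕ, 1 ≤ t ∧ t ≤ n ∧
      (q : ℕ) = ((m : ℕ) + t) % k) ∧
    ∀ i ∈ inactivePegs a, ∀ x : Fin k, ∀ t : ℕ, 1 ≤ t → t ≤ n - 1 →
      ((x : ℕ) + t) % k = (i : ℕ) → rootPerm a x = x)}

/-- The family `R̄_{k,n}`: the identity together with all Hanoi automorphisms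
`a` such that (1) `Q_a ⊆ {m+1, …, m+n}` for some `m`, and (2) whenever
`i ∈ Q_a` the root permutation of `a` fixes `i+1, …, i+(n-1)`
(all peg labels mod `k`). -/
noncomputable def Rover (k n : ℕ) : Set (Equiv.Perm (Word k)) :=
  {a | a = 1 ∨ (IsHanoiAut a ∧
    (∃ m : Fin k, ∀ q ∈ inactivePegs a, ∃ t : ℕ, 1 ≤ t ∧ t ≤ n ∧
      (q : ℕ) = ((m : ℕ) + t) % k) ∧
    ∀ i ∈ inactivePegs a, ∀ x : Fin k, ∀ t : ℕ, 1 ≤ t → t ≤ n - 1 →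
      (x : ℕ) = ((i : ℕ) + t) % k → rootPerm a x = x)}

/-- The finite word `x_m … x_1` (first letter `x_m`) read off from a
left-infinite sequence `… x_2 x_1`, encoded as `x : ℕ → Fin k` with
`x s = x_{s+1}`. -/
def wordOf {k : ℕ} (x : ℕ → Fin k) (m : ℕ) : Word k := (List.range m).reverse.map x


variable {k : ℕ}

lemma perm_apply_inv_self {α : Type*} (e : Equiv.Perm α) (u : α) : e (e⁻¹ u) = u :=
  (Equiv.eq_symm_apply e).mp rfl

lemma surj_of_inj_lenpres {f : Word k → Word k} (hlen : ∀ w, (f w).length = w.length)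
    (hinj : Function.Injective f) : Function.Surjective f := by
  intro u
  have hfin : {l : Word k | l.length = u.length}.Finite := List.finite_length_eq _ _
  have hmaps : Set.MapsTo f {l : Word k | l.length = u.length} {l : Word k | l.length = u.length} :=
    fun w hw => by simp only [Set.mem_setOf_eq] at *; rw [hlen]; exact hw
  have hbij := (hfin.injOn_iff_bijOn_of_mapsTo hmaps).mp hinj.injOn
  obtain ⟨w, _, hw⟩ := hbij.surjOn (show u ∈ {l : Word k | l.length = u.length} from rfl)
  exact ⟨w, hw⟩

lemma IsTreeAut.take {e : Equiv.Perm (Word k)} (he : IsTreeAut e) (w : Word k) (n : ℕ)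
    (hn : n ≤ w.length) : (e w).take n = e (w.take n) := by
  have h1 : w.take n = (w.take n).take n := by simp [List.take_take]
  rw [he.2 w (w.take n) n h1]
  apply List.take_of_length_le
  rw [he.1, List.length_take]
  exact le_of_eq (min_eq_left hn)

lemma rootPerm_bij {e : Equiv.Perm (Word k)} (he : IsTreeAut e) :
    Function.Bijective (fun x : Fin k => ((e [x]).head?.getD x)) := by
  have hsing : ∀ x : Fin k, e [x] = [(e [x]).head?.getD x] := by
    intro x
    have h1 : (e [x]).length = 1 := by rw [he.1]; rfl
    obtain ⟨a, ha⟩ := List.length_eq_one_iff.mp h1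
    simp [ha]
  refine Finite.injective_iff_bijective.mp ?_
  intro x y hxy
  have h : e [x] = e [y] := by rw [hsing x, hsing y]; exact congrArg (fun z => [z]) hxy
  simpa using e.injective h

lemma apply_singleton {e : Equiv.Perm (Word k)} (he : IsTreeAut e) (x : Fin k) :
    e [x] = [rootPerm e x] := by
  have hsing : e [x] = [(e [x]).head?.getD x] := by
    have h1 : (e [x]).length = 1 := by rw [he.1]; rfl
    obtain ⟨a, ha⟩ := List.length_eq_one_iff.mp h1
    simp [ha]
  rw [rootPerm, dif_pos (rootPerm_bij he)]
  exact hsing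

lemma sec_bij {e : Equiv.Perm (Word k)} (he : IsTreeAut e) (x : Fin k) :
    Function.Bijective (fun w : Word k => (e (x :: w)).tail) := by
  have hlen : ∀ w : Word k, ((e (x :: w)).tail).length = w.length := by
    intro w; rw [List.length_tail, he.1]; rfl
  have hinj : Function.Injective (fun w : Word k => (e (x :: w)).tail) := by
    intro w v h
    have h' : (e (x :: w)).tail = (e (x :: v)).tail := h
    have ht : (e (x :: w)).take 1 = (e (x :: v)).take 1 := he.2 _ _ 1 rfl
    have hew : e (x :: w) = e (x :: v) := by
      have h1 : (e (x :: w)).length = w.length + 1 := by rw [he.1]; rfl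
      have h2 : (e (x :: v)).length = v.length + 1 := by rw [he.1]; rfl
      cases hw1 : e (x :: w) with
      | nil => rw [hw1] at h1; simp at h1
      | cons a t =>
        cases hw2 : e (x :: v) with
        | nil => rw [hw2] at h2; simp at h2
        | cons b s =>
          rw [hw1, hw2] at ht h'
          have e1 : List.take 1 (a :: t) = [a] := rfl
          have e2 : List.take 1 (b :: s) = [b] := rfl
          rw [e1, e2] at ht
          simp only [List.tail_cons] at h'
          simp only [List.cons.injEq, and_true] at ht
          rw [ht, h']
    have := e.injective hew
    simpa using this
  exact ⟨hinj, surj_of_inj_lenpres hlen hinj⟩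

lemma cons_apply {e : Equiv.Perm (Word k)} (he : IsTreeAut e) (x : Fin k) (w : Word k) :
    e (x :: w) = rootPerm e x :: sec e x w := by
  have hsec : (sec e x) w = (e (x :: w)).tail := by
    rw [sec, dif_pos (sec_bij he x)]; rfl
  have ht : (e (x :: w)).take 1 = [rootPerm e x] := by
    have h := he.2 (x :: w) [x] 1 rfl
    rw [h, apply_singleton he x]
    rfl
  have h1 : (e (x :: w)).length = w.length + 1 := by rw [he.1]; rfl
  cases hw1 : e (x :: w) with
  | nil => rw [hw1] at h1; simp at h1
  | cons a t =>
    rw [hw1] at ht hsec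
    have e1 : List.take 1 (a :: t) = [a] := rfl
    rw [e1] at ht
    simp only [List.cons.injEq, and_true] at ht
    simp only [List.tail_cons] at hsec
    rw [ht, hsec]

lemma IsTreeAut.mul {a b : Equiv.Perm (Word k)} (ha : IsTreeAut a) (hb : IsTreeAut b) :
    IsTreeAut (a * b) := by
  constructor
  · intro w; rw [Equiv.Perm.mul_apply, ha.1, hb.1]
  · intro w v n h
    rw [Equiv.Perm.mul_apply, Equiv.Perm.mul_apply]
    exact ha.2 _ _ n (hb.2 _ _ n h)

lemma tree_aut_one : IsTreeAut (1 : Equiv.Perm (Word k)) :=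
  ⟨fun w => rfl, fun w v n h => h⟩

lemma mul_cons_eq {a b : Equiv.Perm (Word k)} (ha : IsTreeAut a) (hb : IsTreeAut b)
    (x : Fin k) (w : Word k) :
    rootPerm (a * b) x :: (sec (a * b) x) w
      = rootPerm a (rootPerm b x) :: (sec a (rootPerm b x)) ((sec b x) w) := by
  rw [← cons_apply (ha.mul hb) x w, Equiv.Perm.mul_apply, cons_apply hb, cons_apply ha]

lemma rootPerm_mul {a b : Equiv.Perm (Word k)} (ha : IsTreeAut a) (hb : IsTreeAut b) :
    rootPerm (a * b) = rootPerm a * rootPerm b := by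
  apply Equiv.ext
  intro x
  have h := mul_cons_eq ha hb x []
  rw [Equiv.Perm.mul_apply]
  simpa using congrArg List.head? h

lemma sec_mul {a b : Equiv.Perm (Word k)} (ha : IsTreeAut a) (hb : IsTreeAut b) (x : Fin k) :
    sec (a * b) x = sec a (rootPerm b x) * sec b x := by
  apply Equiv.ext
  intro w
  have h := mul_cons_eq ha hb x w
  rw [Equiv.Perm.mul_apply]
  simpa using congrArg List.tail h

lemma rootPerm_one : rootPerm (1 : Equiv.Perm (Word k)) = 1 := by
  apply Equiv.ext
  intro x
  have h := cons_apply (tree_aut_one (k := k)) x []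
  simpa using (congrArg List.head? h).symm

lemma sec_one (x : Fin k) : sec (1 : Equiv.Perm (Word k)) x = 1 := by
  apply Equiv.ext
  intro w
  have h := cons_apply (tree_aut_one (k := k)) x w
  simpa using (congrArg List.tail h).symm

lemma IsTreeAut.listProd {L : List (Equiv.Perm (Word k))} (h : ∀ s ∈ L, IsTreeAut s) :
    IsTreeAut L.prod := by
  induction L with
  | nil => exact tree_aut_one
  | cons s t ih =>
    rw [List.prod_cons]
    exact (h s (by simp)).mul (ih fun x hx => h x (by simp [hx]))

lemma IsTreeAut.inv {e : Equiv.Perm (Word k)} (he : IsTreeAut e) : IsTreeAut e⁻¹ := by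
  have hlen : ∀ u : Word k, (e⁻¹ u).length = u.length := by
    intro u
    conv_rhs => rw [← perm_apply_inv_self e u]
    rw [he.1]
  refine ⟨hlen, ?_⟩
  intro u v n h
  by_cases hu : n ≤ u.length
  · by_cases hv : n ≤ v.length
    · apply e.injective
      rw [← he.take _ n (by rw [hlen]; exact hu), ← he.take _ n (by rw [hlen]; exact hv)]
      simp [h]
    · exfalso
      push_neg at hv
      rw [List.take_of_length_le hv.le] at h
      have : (u.take n).length = n := by rw [List.length_take]; exact min_eq_left hu
      rw [h] at this
      omega
  · push_neg at hu
    rw [List.take_of_length_le hu.le] at h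
    by_cases hv : n ≤ v.length
    · exfalso
      have : (v.take n).length = n := by rw [List.length_take]; exact min_eq_left hv
      rw [← h] at this
      omega
    · push_neg at hv
      rw [List.take_of_length_le hv.le] at h
      rw [h]

lemma rootPerm_inv {a : Equiv.Perm (Word k)} (ha : IsTreeAut a) :
    rootPerm a⁻¹ = (rootPerm a)⁻¹ := by
  have h : rootPerm a⁻¹ * rootPerm a = 1 := by
    rw [← rootPerm_mul ha.inv ha, inv_mul_cancel, rootPerm_one]
  exact eq_inv_of_mul_eq_one_left h

lemma sec_inv {a : Equiv.Perm (Word k)} (ha : IsTreeAut a) (y : Fin k) :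
    sec a⁻¹ y = (sec a ((rootPerm a)⁻¹ y))⁻¹ := by
  have h1 : sec (a⁻¹ * a) ((rootPerm a)⁻¹ y)
      = sec a⁻¹ (rootPerm a ((rootPerm a)⁻¹ y)) * sec a ((rootPerm a)⁻¹ y) :=
    sec_mul ha.inv ha _
  rw [inv_mul_cancel, sec_one, perm_apply_inv_self] at h1
  exact eq_inv_of_mul_eq_one_left h1.symm

lemma IsHanoiWith.inv {a : Equiv.Perm (Word k)} {Q : Set (Fin k)}
    (h : IsHanoiWith a Q) : IsHanoiWith a⁻¹ Q := by
  obtain ⟨ht, hact, hinact, hfix⟩ := h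
  have hfix' : ∀ j ∈ Q, (rootPerm a)⁻¹ j = j := by
    intro j hj
    apply (rootPerm a).injective
    rw [perm_apply_inv_self, hfix j hj]
  refine ⟨ht.inv, ?_, ?_, ?_⟩
  · intro i hi
    have hx : (rootPerm a)⁻¹ i ∉ Q := by
      intro hmem
      have hfx : rootPerm a ((rootPerm a)⁻¹ i) = (rootPerm a)⁻¹ i := hfix _ hmem
      rw [perm_apply_inv_self] at hfx
      rw [← hfx] at hmem
      exact hi hmem
    rw [sec_inv ht, hact _ hx, inv_one]
  · intro j hj
    rw [sec_inv ht, hfix' j hj, hinact j hj]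
  · intro j hj
    rw [rootPerm_inv ht, hfix' j hj]

lemma IsHanoiWith.unique {a : Equiv.Perm (Word k)} {Q Q' : Set (Fin k)}
    (h : IsHanoiWith a Q) (h' : IsHanoiWith a Q') (ha : a ≠ 1) : Q = Q' := by
  ext j
  constructor
  · intro hj
    by_contra hj'
    exact ha (by rw [← h.2.2.1 j hj, h'.2.1 j hj'])
  · intro hj
    by_contra hj'
    exact ha (by rw [← h'.2.2.1 j hj, h.2.1 j hj'])

lemma inactivePegs_spec {a : Equiv.Perm (Word k)} {Q : Set (Fin k)}
    (h : IsHanoiWith a Q) (ha : a ≠ 1) : inactivePegs a = Q := by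
  rw [inactivePegs, if_neg ha, dif_pos ⟨Q, h⟩]
  exact IsHanoiWith.unique (Exists.choose_spec (⟨Q, h⟩ : ∃ Q, IsHanoiWith a Q)) h ha

lemma IsHanoiAut.isTreeAut {s : Equiv.Perm (Word k)} (h : IsHanoiAut s) : IsTreeAut s :=
  h.choose_spec.1

lemma hanoi_sec_inactive {s : Equiv.Perm (Word k)} (hs : IsHanoiAut s) {j : Fin k}
    (hj : j ∈ inactivePegs s) : sec s j = s ∧ rootPerm s j = j := by
  by_cases h1 : s = 1
  · subst h1
    exact ⟨sec_one j, by rw [rootPerm_one]; rfl⟩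
  · obtain ⟨Q, hQ⟩ := hs
    rw [inactivePegs_spec hQ h1] at hj
    exact ⟨hQ.2.2.1 j hj, hQ.2.2.2 j hj⟩

lemma hanoi_sec_active {s : Equiv.Perm (Word k)} (hs : IsHanoiAut s) {j : Fin k}
    (hj : j ∉ inactivePegs s) : sec s j = 1 := by
  by_cases h1 : s = 1
  · exact absurd (by rw [h1, inactivePegs, if_pos rfl]; trivial) hj
  · obtain ⟨Q, hQ⟩ := hs
    rw [inactivePegs_spec hQ h1] at hj
    exact hQ.2.1 j hj

lemma prod_sec_mem {L : List (Equiv.Perm (Word k))} (hL : ∀ s ∈ L, IsHanoiAut s)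
    {j : Fin k} (hj : ∀ s ∈ L, j ∈ inactivePegs s) :
    rootPerm L.prod j = j ∧ sec L.prod j = L.prod := by
  induction L with
  | nil =>
    refine ⟨by rw [List.prod_nil, rootPerm_one]; rfl, by rw [List.prod_nil, sec_one]⟩
  | cons s t ih =>
    have hs := hL s (by simp)
    have htH : ∀ x ∈ t, IsHanoiAut x := fun x hx => hL x (by simp [hx])
    have htt : IsTreeAut t.prod := IsTreeAut.listProd (fun x hx => (htH x hx).isTreeAut)
    obtain ⟨ih1, ih2⟩ := ih htH (fun x hx => hj x (by simp [hx]))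
    obtain ⟨hss, hsr⟩ := hanoi_sec_inactive hs (hj s (by simp))
    constructor
    · rw [List.prod_cons, rootPerm_mul hs.isTreeAut htt, Equiv.Perm.mul_apply, ih1, hsr]
    · rw [List.prod_cons, sec_mul hs.isTreeAut htt, ih1, hss, ih2]

lemma prod_sec_rep (S : Set (Equiv.Perm (Word k))) :
    ∀ L : List (Equiv.Perm (Word k)), (∀ s ∈ L, IsHanoiAut s) →
      (∀ s ∈ L, s ∈ S ∨ s⁻¹ ∈ S) → ∀ j : Fin k,
      ∃ L' : List (Equiv.Perm (Word k)), (∀ t ∈ L', t ∈ S ∨ t⁻¹ ∈ S) ∧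
        L'.prod = sec L.prod j ∧ L'.length ≤ L.length ∧
        ((∃ s ∈ L, j ∉ inactivePegs s) → L'.length < L.length) := by
  intro L
  induction L with
  | nil =>
    intro _ _ j
    exact ⟨[], by simp, by rw [List.prod_nil, sec_one], le_refl 0, by simp⟩
  | cons s t ih =>
    intro hH hs j
    have hsH := hH s (by simp)
    have htH : ∀ x ∈ t, IsHanoiAut x := fun x hx => hH x (by simp [hx])
    have htS : ∀ x ∈ t, x ∈ S ∨ x⁻¹ ∈ S := fun x hx => hs x (by simp [hx])
    have htt : IsTreeAut t.prod := IsTreeAut.listProd (fun x hx => (htH x hx).isTreeAut)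
    by_cases hcase : ∀ x ∈ t, j ∈ inactivePegs x
    · obtain ⟨hA1, hA2⟩ := prod_sec_mem htH hcase
      by_cases hjs : j ∈ inactivePegs s
      · refine ⟨s :: t, hs, ?_, le_refl _, ?_⟩
        · rw [List.prod_cons, sec_mul hsH.isTreeAut htt, hA1, hA2,
            (hanoi_sec_inactive hsH hjs).1]
        · rintro ⟨x, hx, hxn⟩
          rcases List.mem_cons.mp hx with rfl | hx'
          · exact absurd hjs hxn
          · exact absurd (hcase x hx') hxn
      · refine ⟨t, htS, ?_, by simp, fun _ => by simp⟩
        rw [List.prod_cons, sec_mul hsH.isTreeAut htt, hA1, hA2, hanoi_sec_active hsH hjs, one_mul]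
    · push_neg at hcase
      obtain ⟨x0, hx0, hx0n⟩ := hcase
      obtain ⟨L', hL'S, hL'p, hL'len, hL'lt⟩ := ih htH htS j
      have hlt : L'.length < t.length := hL'lt ⟨x0, hx0, hx0n⟩
      by_cases hy : rootPerm t.prod j ∈ inactivePegs s
      · refine ⟨s :: L', ?_, ?_, ?_, fun _ => ?_⟩
        · intro u hu
          rcases List.mem_cons.mp hu with rfl | hu'
          · exact hs u (by simp)
          · exact hL'S u hu'
        · rw [List.prod_cons, List.prod_cons, sec_mul hsH.isTreeAut htt,
            (hanoi_sec_inactive hsH hy).1, hL'p]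
        · simpa using Nat.succ_le_succ hlt.le
        · simpa using Nat.succ_lt_succ hlt
      · refine ⟨L', hL'S, ?_, ?_, fun _ => ?_⟩
        · rw [List.prod_cons, sec_mul hsH.isTreeAut htt, hanoi_sec_active hsH hy, one_mul, hL'p]
        · simp only [List.length_cons]; omega
        · simp only [List.length_cons]; omega


/-- Lemma 4.1, length lemma.
Let `G` be a `k`-peg Hanoi group with generating set `S` and let `g ≠ 1` have
a representation `g = s_n ⋯ s_2 s_1` with essential set `Q`.  Then
(1) `g|_j = g` for every `j ∈ Q`, and (2) `l(g|_j) < n` for every `j ∉ Q`. -/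
theorem length_lemma {k : ℕ} (S : Set (Equiv.Perm (Word k)))
    (hS1 : (1 : Equiv.Perm (Word k)) ∈ S) (hS : ∀ a ∈ S, IsHanoiAut a)
    (g : Equiv.Perm (Word k)) (hg : g ≠ 1)
    (L : List (Equiv.Perm (Word k))) (hL : IsRepOf S L g) :
    (∀ j ∈ essSet L, sec g j = g) ∧
      ∀ j : Fin k, j ∉ essSet L → repLength S (sec g j) < L.length := by
  obtain ⟨hLmem, hLprod⟩ := hL
  have hH : ∀ s ∈ L, IsHanoiAut s := by
    intro s hsL
    rcases hLmem s hsL with h | h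
    · exact hS s h
    · obtain ⟨Q, hQ⟩ := hS s⁻¹ h
      exact ⟨Q, by simpa using hQ.inv⟩
  constructor
  · intro j hj
    have hj' : ∀ s ∈ L, j ∈ inactivePegs s := by
      intro s hsL
      have := Set.mem_iInter₂.mp (by simpa [essSet] using hj) s hsL
      exact this
    rw [← hLprod]
    exact (prod_sec_mem hH hj').2
  · intro j hj
    have hex : ∃ s ∈ L, j ∉ inactivePegs s := by
      by_contra h
      push_neg at h
      exact hj (by simpa [essSet] using Set.mem_iInter₂.mpr h)
    obtain ⟨L', h1, h2, _, h4⟩ := prod_sec_rep S L hH hLmem j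
    have hlt := h4 hex
    have hle : repLength S (sec g j) ≤ L'.length :=
      Nat.sInf_le ⟨L', ⟨h1, by rw [h2, hLprod]⟩, rfl⟩
    exact lt_of_le_of_lt hle hlt


end Hanoi
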